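/- Every K_n-treelike finite connected graph (n ≥ 2) is C-HH: every homomorphism from a finite connected induced subgraph into the graph extends to an endomorphism. -/

import Mathlib

/-- `G` is C-HH: every homomorphism from a finite connected induced subgraph
of `G` into `G` extends to an endomorphism of `G`. -/
def IsCHH {α : Type*} (G : SimpleGraph α) : Prop :=
  ∀ A : Set α, A.Finite → (G.induce A).Connected →
    ∀ φ : G.induce A →g G, ∃ ψ : G →g G, ∀ a : A, ψ a.1 = φ a

/-- `G` has an induced cycle of length `k`: there are `k` distinct vertices
whose induced subgraph is exactly the `k`-cycle (no chords). -/
def HasInducedCycle {α : Type*} (G : SimpleGraph α) (k : ℕ) : Prop :=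
  ∃ f : Fin k ↪ α, ∀ i j : Fin k,
    G.Adj (f i) (f j) ↔ ((i.val + 1) % k = j.val ∨ (j.val + 1) % k = i.val)

/-- `H` is a disjoint union of complete graphs each of size `m`: adjacency is
transitive (so each component is a clique) and each closed neighbourhood has
exactly `m` vertices. -/
def IsDisjUnionOfCompleteOfSize {α : Type*} (H : SimpleGraph α) (m : ℕ) : Prop :=
  (∀ x y z : α, H.Adj x y → H.Adj y z → x ≠ z → H.Adj x z) ∧
  ∀ x : α, (insert x {y | H.Adj x y}).ncard = m

section Aux
variable {α : Type*} {G : SimpleGraph α}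

def WalkFun (G : SimpleGraph α) (A : Set α) (u1 u2 : α) (x : ℕ → α) (m : ℕ) : Prop :=
  x 0 = u1 ∧ x m = u2 ∧ (∀ i < m, G.Adj (x i) (x (i + 1))) ∧ (∀ i ≤ m, x i ∈ A)

lemma exists_walkFun {A : Set α} {u1 u2 : α} (h1 : u1 ∈ A) (h2 : u2 ∈ A)
    (h : (G.induce A).Reachable ⟨u1, h1⟩ ⟨u2, h2⟩) :
    ∃ m x, WalkFun G A u1 u2 x m := by
  obtain ⟨w⟩ := h
  refine ⟨w.length, fun i => (w.getVert i).1, ?_, ?_, ?_, ?_⟩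
  · simp [SimpleGraph.Walk.getVert_zero]
  · simp [SimpleGraph.Walk.getVert_length]
  · intro i hi
    exact w.adj_getVert_succ hi
  · intro i _
    exact (w.getVert i).2


lemma adj_of_walkFun {A : Set α} {v : α} (hv : v ∉ A)
    (hcyc : ∀ k, 4 ≤ k → ¬ HasInducedCycle G k)
    (htrans : ∀ x y z : G.neighborSet v, G.Adj x.1 y.1 → G.Adj y.1 z.1 → x.1 ≠ z.1 →
      G.Adj x.1 z.1) :
    ∀ k u1 u2, u1 ∈ A → u2 ∈ A → G.Adj v u1 → G.Adj v u2 → u1 ≠ u2 →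
      (∃ x, WalkFun G A u1 u2 x k) → G.Adj u1 u2 := by
  intro k
  induction k using Nat.strong_induction_on with
  | _ k IH =>
  intro u1 u2 h1 h2 hv1 hv2 hne hwalk
  classical
  have hP : ∃ m, ∃ x, WalkFun G A u1 u2 x m := ⟨k, hwalk⟩
  obtain ⟨y, hy0, hyE, hyadj, hymem⟩ := Nat.find_spec hP
  set m0 := Nat.find hP with hm0
  have hmin : ∀ m < m0, ¬ ∃ x, WalkFun G A u1 u2 x m := fun m hm => Nat.find_min hP hm
  have hkle : m0 ≤ k := Nat.find_le hwalk
  have hm0pos : 0 < m0 := by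
    rcases Nat.eq_zero_or_pos m0 with h | h
    · exact absurd (hy0.symm.trans (h ▸ hyE)) hne
    · exact h
  -- no chords
  have hchord : ∀ i j, i < j → j ≤ m0 → G.Adj (y i) (y j) → j = i + 1 := by
    intro i j hij hjm hadj
    by_contra hne2
    have hj2 : i + 2 ≤ j := by omega
    refine hmin (m0 - (j - i) + 1) (by omega) ⟨fun t => if t ≤ i then y t else y (t + (j - i) - 1),
      ?_, ?_, ?_, ?_⟩
    · dsimp only; rw [if_pos (Nat.zero_le _)]; exact hy0
    · dsimp only
      rw [if_neg (by omega)]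
      have e : m0 - (j - i) + 1 + (j - i) - 1 = m0 := by omega
      rw [e, hyE]
    · intro t ht
      dsimp only
      rcases lt_trichotomy t i with h | h | h
      · rw [if_pos (by omega), if_pos (by omega)]
        exact hyadj t (by omega)
      · rw [if_pos (by omega), if_neg (by omega)]
        have e : t + 1 + (j - i) - 1 = j := by omega
        rw [e, h]; exact hadj
      · rw [if_neg (by omega), if_neg (by omega)]
        have e1 : t + 1 + (j - i) - 1 = (t + (j - i) - 1) + 1 := by omega
        rw [e1]
        exact hyadj _ (by omega)
    · intro t ht
      dsimp only
      split
      · exact hymem t (by omega)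
      · exact hymem _ (by omega)
  -- vertices distinct
  have hdist : ∀ i j, i < j → j ≤ m0 → y i ≠ y j := by
    intro i j hij hjm heq
    rcases eq_or_lt_of_le hjm with hj | hj
    · exact hmin i (by omega) ⟨y, hy0, by rw [heq, hj, hyE], fun t ht => hyadj t (by omega),
        fun t ht => hymem t (by omega)⟩
    · refine hmin (m0 - (j - i)) (by omega) ⟨fun t => if t ≤ i then y t else y (t + (j - i)),
        ?_, ?_, ?_, ?_⟩
      · dsimp only; rw [if_pos (Nat.zero_le _)]; exact hy0
      · dsimp only
        rw [if_neg (by omega)]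
        have e : m0 - (j - i) + (j - i) = m0 := by omega
        rw [e, hyE]
      · intro t ht
        dsimp only
        rcases lt_trichotomy t i with h | h | h
        · rw [if_pos (by omega), if_pos (by omega)]
          exact hyadj t (by omega)
        · rw [if_pos (by omega), if_neg (by omega)]
          have e : t + 1 + (j - i) = j + 1 := by omega
          rw [e, h, heq]
          exact hyadj j (by omega)
        · rw [if_neg (by omega), if_neg (by omega)]
          have e1 : t + 1 + (j - i) = (t + (j - i)) + 1 := by omega
          rw [e1]
          exact hyadj _ (by omega)
      · intro t ht
        dsimp only
        split
        · exact hymem t (by omega)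
        · exact hymem _ (by omega)
  rcases eq_or_lt_of_le (show 1 ≤ m0 from hm0pos) with hm1 | hm2
  · -- m0 = 1
    have h := hyadj 0 (by omega)
    rw [hy0] at h
    have e : y 1 = u2 := by rw [← hm1] at hyE; exact hyE
    rwa [e] at h
  -- m0 ≥ 2
  by_cases hint : ∃ i, 0 < i ∧ i < m0 ∧ G.Adj v (y i)
  · obtain ⟨i, hi0, him, hvi⟩ := hint
    have hu1i : G.Adj u1 (y i) :=
      IH i (by omega) u1 (y i) h1 (hymem i (by omega)) hv1 hvi
        (by rw [← hy0]; exact hdist 0 i hi0 (by omega))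
        ⟨y, hy0, rfl, fun t ht => hyadj t (by omega), fun t ht => hymem t (by omega)⟩
    have hiu2 : G.Adj (y i) u2 :=
      IH (m0 - i) (by omega) (y i) u2 (hymem i (by omega)) h2 hvi hv2
        (by rw [← hyE]; exact hdist i m0 him le_rfl)
        ⟨fun t => y (i + t), rfl, by dsimp only; rw [show i + (m0 - i) = m0 by omega, hyE],
          fun t ht => by
            dsimp only
            rw [show i + (t + 1) = (i + t) + 1 by omega]
            exact hyadj (i + t) (by omega),
          fun t ht => hymem (i + t) (by omega)⟩
    exact htrans ⟨u1, hv1⟩ ⟨y i, hvi⟩ ⟨u2, hv2⟩ hu1i hiu2 hne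
  · -- build an induced cycle of length m0 + 2
    push_neg at hint
    exfalso
    apply hcyc (m0 + 2) (by omega)
    have hinj : Function.Injective (fun i : Fin (m0 + 2) =>
        if i.1 ≤ m0 then y i.1 else v) := by
      intro i j hij
      have hi2 := i.2
      have hj2 := j.2
      dsimp at hij
      rcases le_or_gt i.1 m0 with hi | hi <;> rcases le_or_gt j.1 m0 with hj | hj
      · rw [if_pos hi, if_pos hj] at hij
        rcases lt_trichotomy i.1 j.1 with h | h | h
        · exact absurd hij (hdist _ _ h hj)
        · exact Fin.ext h
        · exact absurd hij.symm (hdist _ _ h hi)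
      · rw [if_pos hi, if_neg (by omega)] at hij
        exact absurd (hij ▸ hymem i.1 hi) hv
      · rw [if_neg (by omega), if_pos hj] at hij
        exact absurd (hij.symm ▸ hymem j.1 hj) hv
      · exact Fin.ext (by omega)
    refine ⟨⟨_, hinj⟩, ?_⟩
    intro i j
    have hi2 := i.2
    have hj2 := j.2
    dsimp
    constructor
    · intro hadj
      rcases le_or_gt i.1 m0 with hi | hi <;> rcases le_or_gt j.1 m0 with hj | hj
      · rw [if_pos hi, if_pos hj] at hadj
        rcases lt_trichotomy i.1 j.1 with h | h | h
        · left
          have e := hchord i.1 j.1 h hj hadj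
          rw [Nat.mod_eq_of_lt (by omega)]
          omega
        · rw [show i = j from Fin.ext h] at hadj
          exact absurd hadj (G.irrefl)
        · right
          have e := hchord j.1 i.1 h hi hadj.symm
          rw [Nat.mod_eq_of_lt (by omega)]
          omega
      · -- j = m0 + 1, i ≤ m0 : G.Adj (y i) v
        rw [if_pos hi, if_neg (by omega)] at hadj
        have hcases : i.1 = 0 ∨ i.1 = m0 := by
          by_contra hc
          push_neg at hc
          exact hint i.1 (by omega) (by omega) hadj.symm
        rcases hcases with h | h
        · right
          rw [show j.1 + 1 = m0 + 2 by omega, Nat.mod_self]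
          omega
        · left
          rw [Nat.mod_eq_of_lt (by omega)]
          omega
      · rw [if_neg (by omega), if_pos hj] at hadj
        have hcases : j.1 = 0 ∨ j.1 = m0 := by
          by_contra hc
          push_neg at hc
          exact hint j.1 (by omega) (by omega) hadj
        rcases hcases with h | h
        · left
          rw [show i.1 + 1 = m0 + 2 by omega, Nat.mod_self]
          omega
        · right
          rw [Nat.mod_eq_of_lt (by omega)]
          omega
      · rw [if_neg (by omega), if_neg (by omega)] at hadj
        exact absurd hadj G.irrefl
    · intro hcond
      rcases le_or_gt i.1 m0 with hi | hi <;> rcases le_or_gt j.1 m0 with hj | hj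
      · rw [if_pos hi, if_pos hj]
        rcases hcond with h | h
        · rw [Nat.mod_eq_of_lt (by omega)] at h
          rw [show j.1 = i.1 + 1 by omega]
          exact hyadj i.1 (by omega)
        · rw [Nat.mod_eq_of_lt (by omega)] at h
          rw [show i.1 = j.1 + 1 by omega]
          exact (hyadj j.1 (by omega)).symm
      · rw [if_pos hi, if_neg (by omega)]
        rcases hcond with h | h
        · rw [Nat.mod_eq_of_lt (by omega)] at h
          rw [show i.1 = m0 by omega, hyE]
          exact hv2.symm
        · rw [show j.1 + 1 = m0 + 2 by omega, Nat.mod_self] at h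
          rw [show i.1 = 0 by omega, hy0]
          exact hv1.symm
      · rw [if_neg (by omega), if_pos hj]
        rcases hcond with h | h
        · rw [show i.1 + 1 = m0 + 2 by omega, Nat.mod_self] at h
          rw [show j.1 = 0 by omega, hy0]
          exact hv1
        · rw [Nat.mod_eq_of_lt (by omega)] at h
          rw [show j.1 = m0 by omega, hyE]
          exact hv2
      · rcases hcond with h | h
        · rw [show i.1 + 1 = m0 + 2 by omega, Nat.mod_self] at h
          omega
        · rw [show j.1 + 1 = m0 + 2 by omega, Nat.mod_self] at h
          omega




/-- From a walk leaving `A`, find a boundary edge. -/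
lemma exists_boundary {a b : α} (w : G.Walk a b) :
    ∀ A : Set α, a ∈ A → b ∉ A → ∃ u v, u ∈ A ∧ v ∉ A ∧ G.Adj u v := by
  induction w with
  | nil => intro A ha hb; exact absurd ha hb
  | @cons x c y h p ih =>
    intro A ha hb
    by_cases hc : c ∈ A
    · exact ih A hc hb
    · exact ⟨x, c, ha, hc, h⟩

lemma exists_adj_of_connected (hconn : G.Connected) {z : α} (p : α) (hz : z ≠ p) :
    ∃ q, G.Adj p q := by
  obtain ⟨w⟩ := hconn.preconnected p z
  cases w with
  | nil => exact absurd rfl hz.symm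
  | cons h _ => exact ⟨_, h⟩

/-- Selection lemma: given a clique `T` of size `≤ n - 1` containing `p`
(where `p` has some neighbour), there is a common neighbour of all of `T`. -/
lemma exists_common_nbr [Fintype α] {n : ℕ} (hn : 2 ≤ n)
    (hnbr : ∀ v : α, IsDisjUnionOfCompleteOfSize (G.induce (G.neighborSet v)) (n - 1))
    (T : Set α) (hcl : ∀ x ∈ T, ∀ y ∈ T, x ≠ y → G.Adj x y)
    (p : α) (hp : p ∈ T) (hq : ∃ q, G.Adj p q)
    (hcard : T.ncard ≤ n - 1) :
    ∃ w, ∀ t ∈ T, G.Adj w t := by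
  classical
  -- pick q0 adjacent to p, inside T \ {p} if possible
  obtain ⟨q0, hq0T, hq0⟩ : ∃ q0, (((T \ {p}).Nonempty) → q0 ∈ T \ {p}) ∧ G.Adj p q0 := by
    by_cases hT : (T \ {p}).Nonempty
    · obtain ⟨q0, hq0⟩ := hT
      exact ⟨q0, fun _ => hq0, hcl p hp q0 hq0.1 (Ne.symm hq0.2)⟩
    · obtain ⟨q, hq⟩ := hq
      exact ⟨q, fun h => absurd h hT, hq⟩
  set N := G.neighborSet p
  have hq0N : q0 ∈ N := hq0
  set C : Set ↥N := insert ⟨q0, hq0N⟩ {y | (G.induce N).Adj ⟨q0, hq0N⟩ y} with hC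
  have hCcard : C.ncard = n - 1 := (hnbr p).2 ⟨q0, hq0N⟩
  -- T \ {p} lifts into C
  have hTC : ∀ t (ht : t ∈ T) (hne : t ≠ p), ∃ htN : t ∈ N, (⟨t, htN⟩ : ↥N) ∈ C := by
    intro t ht hne
    have htN : t ∈ N := (hcl p hp t ht (Ne.symm hne))
    refine ⟨htN, ?_⟩
    by_cases h : t = q0
    · left; exact Subtype.ext h
    · right
      exact hcl q0 (hq0T ⟨t, ht, hne⟩).1 t ht (Ne.symm h)
  -- the lifted set
  set T' : Set ↥N := {y | y.1 ∈ T} with hT'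
  have hT'C : T' ⊆ C := by
    intro y hy
    have hnep : y.1 ≠ p := fun h => G.irrefl (h ▸ y.2)
    obtain ⟨_, hc⟩ := hTC y.1 hy hnep
    exact hc
  have hT'card : T'.ncard < C.ncard := by
    have h1 : Subtype.val '' T' ⊆ T \ {p} := by
      rintro _ ⟨y, hy, rfl⟩
      exact ⟨hy, fun h => G.irrefl (h ▸ y.2)⟩
    have h2 : T'.ncard = (Subtype.val '' T').ncard :=
      (Set.ncard_image_of_injective _ Subtype.val_injective).symm
    have h3 : (T \ {p}).ncard = T.ncard - 1 :=
      Set.ncard_diff_singleton_of_mem hp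
    have h4 : (Subtype.val '' T').ncard ≤ (T \ {p}).ncard :=
      Set.ncard_le_ncard h1 (Set.toFinite _)
    rw [hCcard, h2]
    omega
  obtain ⟨w, hwC, hwT'⟩ : ∃ w ∈ C, w ∉ T' := by
    by_contra hcon
    push_neg at hcon
    exact absurd (Set.ncard_le_ncard hcon (Set.toFinite T')) (by omega)
  refine ⟨w.1, ?_⟩
  intro t ht
  by_cases hne : t = p
  · exact hne ▸ (w.2 : G.Adj p w.1).symm
  · obtain ⟨htN, hc⟩ := hTC t ht hne
    have hwt : w ≠ (⟨t, htN⟩ : ↥N) := fun h => hwT' (h ▸ ht)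
    rcases hwC with hw | hw
    · rcases hc with hc | hc
      · exact absurd (hw.trans hc.symm) hwt
      · exact hw ▸ (hc : G.Adj q0 t)
    · rcases hc with hc | hc
      · have ht' : t = q0 := congrArg Subtype.val hc
        rw [ht']
        exact (hw : G.Adj q0 w.1).symm
      · have := (hnbr p).1 w ⟨q0, hq0N⟩ ⟨t, htN⟩ ((G.induce N).adj_symm hw) hc hwt
        exact this


/-- Extending from `univ`. -/
lemma extend_univ (φ : G.induce (Set.univ : Set α) →g G) :
    ∃ ψ : G →g G, ∀ a : (Set.univ : Set α), ψ a.1 = φ a :=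
  ⟨⟨fun x => φ ⟨x, trivial⟩, fun h => φ.map_adj h⟩, fun _ => rfl⟩

end Aux

theorem treelike_isCHH {α : Type*} [Fintype α] (G : SimpleGraph α)
    (n : ℕ) (hn : 2 ≤ n) (hconn : G.Connected)
    (hcyc : ∀ k, 4 ≤ k → ¬ HasInducedCycle G k)
    (hnbr : ∀ v : α,
      IsDisjUnionOfCompleteOfSize (G.induce (G.neighborSet v)) (n - 1)) :
    IsCHH G := by
  classical
  have key : ∀ m : ℕ, ∀ A : Set α, Aᶜ.ncard ≤ m → (G.induce A).Connected →
      ∀ φ : G.induce A →g G, ∃ ψ : G →g G, ∀ a : A, ψ a.1 = φ a := by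
    intro m
    induction m with
    | zero =>
      intro A hA hAconn φ
      have hAc : Aᶜ = ∅ := by
        rw [← Set.ncard_eq_zero (Set.toFinite _)]
        omega
      have hAu : A = Set.univ := Set.compl_empty_iff.mp hAc
      subst hAu
      exact extend_univ φ
    | succ m ih =>
      intro A hA hAconn φ
      by_cases huniv : A = Set.univ
      · subst huniv
        exact extend_univ φ
      · obtain ⟨b, hb⟩ := Set.ne_univ_iff_exists_notMem A |>.mp huniv
        have hAne : A.Nonempty := Set.nonempty_coe_sort.mp hAconn.nonempty
        obtain ⟨a0, ha0⟩ := hAne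
        obtain ⟨wk⟩ := hconn.preconnected a0 b
        obtain ⟨a', v, ha', hvA, hadj⟩ := exists_boundary wk A ha0 hb
        have htrans : ∀ x y z : G.neighborSet v, G.Adj x.1 y.1 → G.Adj y.1 z.1 →
            x.1 ≠ z.1 → G.Adj x.1 z.1 := by
          intro x y z h1 h2 h3
          exact (hnbr v).1 x y z h1 h2 (fun h => h3 (congrArg Subtype.val h))
        have hclique : ∀ u1 ∈ A, ∀ u2 ∈ A, G.Adj v u1 → G.Adj v u2 → u1 ≠ u2 →
            G.Adj u1 u2 := by
          intro u1 hu1 u2 hu2 hv1 hv2 hne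
          obtain ⟨mm, x, hx⟩ := exists_walkFun hu1 hu2 (hAconn.preconnected _ _)
          exact adj_of_walkFun hvA hcyc htrans mm u1 u2 hu1 hu2 hv1 hv2 hne ⟨x, hx⟩
        set T : Set α := (fun u : ↥A => φ u) '' {u : ↥A | G.Adj v u.1} with hTdef
        have hpT : φ ⟨a', ha'⟩ ∈ T := ⟨⟨a', ha'⟩, hadj.symm, rfl⟩
        have hq : ∃ q, G.Adj (φ ⟨a', ha'⟩) q := by
          rcases eq_or_ne (φ ⟨a', ha'⟩) v with h | h
          · exact exists_adj_of_connected hconn _ (fun he => hadj.ne (he.trans h))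
          · exact exists_adj_of_connected hconn _ (Ne.symm h)
        have hTcl : ∀ x ∈ T, ∀ y ∈ T, x ≠ y → G.Adj x y := by
          rintro _ ⟨u1, hu1, rfl⟩ _ ⟨u2, hu2, rfl⟩ hne
          have hne' : u1.1 ≠ u2.1 := by
            intro h
            exact hne (congrArg _ (Subtype.ext h))
          exact φ.map_adj (hclique u1.1 u1.2 u2.1 u2.2 hu1 hu2 hne')
        have hTcard : T.ncard ≤ n - 1 := by
          have ha'N : a' ∈ G.neighborSet v := hadj.symm
          have hD : (insert (⟨a', ha'N⟩ : ↥(G.neighborSet v))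
              {y | (G.induce (G.neighborSet v)).Adj ⟨a', ha'N⟩ y}).ncard = n - 1 :=
            (hnbr v).2 _
          set D := insert (⟨a', ha'N⟩ : ↥(G.neighborSet v))
              {y | (G.induce (G.neighborSet v)).Adj ⟨a', ha'N⟩ y} with hDdef
          set S'' : Set ↥(G.neighborSet v) := {y | y.1 ∈ A} with hS''
          have hsub : T ⊆ (fun y : ↥(G.neighborSet v) =>
              if h : y.1 ∈ A then φ ⟨y.1, h⟩ else φ ⟨a', ha'⟩) '' S'' := by
            rintro _ ⟨u, hu, rfl⟩
            refine ⟨⟨u.1, hu⟩, u.2, ?_⟩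
            dsimp only
            rw [dif_pos u.2]
          have hS''D : S'' ⊆ D := by
            intro y hy
            by_cases h : y.1 = a'
            · left; exact Subtype.ext h
            · right
              exact (hclique a' ha' y.1 hy hadj.symm y.2 (Ne.symm h)).symm.symm
          calc T.ncard ≤ _ := Set.ncard_le_ncard hsub (Set.toFinite _)
            _ ≤ S''.ncard := Set.ncard_image_le (Set.toFinite _)
            _ ≤ D.ncard := Set.ncard_le_ncard hS''D (Set.toFinite _)
            _ = n - 1 := hD
        obtain ⟨w, hw⟩ := exists_common_nbr hn hnbr T hTcl _ hpT hq hTcard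
        -- the extended homomorphism
        have hφ'adj : ∀ x y : ↥(insert v A), (G.induce (insert v A)).Adj x y →
            G.Adj (if h : x.1 ∈ A then φ ⟨x.1, h⟩ else w)
              (if h : y.1 ∈ A then φ ⟨y.1, h⟩ else w) := by
          rintro ⟨x, hx⟩ ⟨y, hy⟩ hxy
          have hxy' : G.Adj x y := hxy
          dsimp only
          split_ifs with h1 h2 h2
          · exact φ.map_adj hxy'
          · have hyv : y = v := by
              rcases hy with h | h
              · exact h
              · exact absurd h h2
            subst hyv
            exact (hw _ ⟨⟨x, h1⟩, hxy'.symm, rfl⟩).symm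
          · have hxv : x = v := by
              rcases hx with h | h
              · exact h
              · exact absurd h h1
            subst hxv
            exact hw _ ⟨⟨y, h2⟩, hxy', rfl⟩
          · have hxv : x = v := by
              rcases hx with h | h
              · exact h
              · exact absurd h h1
            have hyv : y = v := by
              rcases hy with h | h
              · exact h
              · exact absurd h h2
            subst hxv; subst hyv
            exact absurd hxy' G.irrefl
        have hconn' : (G.induce (insert v A)).Connected := by
          have hreach : ∀ x : ↥(insert v A),
              (G.induce (insert v A)).Reachable x ⟨a', Set.mem_insert_of_mem _ ha'⟩ := by
            intro x
            rcases Set.mem_insert_iff.mp x.2 with hx | hx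
            · refine SimpleGraph.Adj.reachable ?_
              show (G.induce (insert v A)).Adj _ _
              have h : G.Adj x.1 a' := by rw [hx]; exact hadj.symm
              exact h
            · exact SimpleGraph.Reachable.map
                (⟨fun u => ⟨u.1, Set.mem_insert_of_mem _ u.2⟩, fun h => h⟩ :
                  G.induce A →g G.induce (insert v A))
                (hAconn.preconnected ⟨x.1, hx⟩ ⟨a', ha'⟩)
          rw [SimpleGraph.connected_iff]
          exact ⟨fun x y => (hreach x).trans (hreach y).symm, ⟨⟨v, Set.mem_insert _ _⟩⟩⟩
        have hcard' : (insert v A)ᶜ.ncard ≤ m := by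
          have he : (insert v A)ᶜ = Aᶜ \ {v} := by
            ext z
            simp [Set.mem_insert_iff]
            tauto
          have hvc : v ∈ Aᶜ := hvA
          have h1 : (Aᶜ \ {v}).ncard = Aᶜ.ncard - 1 :=
            Set.ncard_diff_singleton_of_mem hvc
          rw [he, h1]
          omega
        obtain ⟨ψ, hψ⟩ := ih (insert v A) hcard' hconn'
          ⟨fun x => if h : x.1 ∈ A then φ ⟨x.1, h⟩ else w, fun {x y} h => hφ'adj x y h⟩
        refine ⟨ψ, fun a => ?_⟩
        have := hψ ⟨a.1, Set.mem_insert_of_mem _ a.2⟩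
        exact this.trans (dif_pos a.2)
  intro A hAfin hAconn φ
  exact key Aᶜ.ncard A le_rfl hAconn φ
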